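/- Let (A[[ν]],⋆) be a formal deformation of A and H_ν := Z(A) + ν·A[[ν]]. Then: (a) for all A, B ∈ H_ν, A⋆B − B⋆A ∈ ν·H_ν; (b) ν·H_ν is a two-sided ideal of the algebra (H_ν,⋆): for A ∈ H_ν and C ∈ ν·H_ν, both A⋆C and C⋆A lie in ν·H_ν; and (c) for A ∈ H_ν and C ∈ ν·H_ν, A⋆C − C⋆A ∈ ν²·H_ν. Consequently the quotient H_ν/νH_ν, with product induced by ⋆ and bracket induced by (1/ν)[·,·]_⋆, is a commutative Poisson algebra. -/

import Mathlib

open PowerSeries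

/-- A formal deformation `(A⟦ν⟧, ⋆)` of an associative unital `R`-algebra `A`:
an `R⟦ν⟧`-bilinear, associative, unital (with unit the constant series `1`)
multiplication `⋆` on the `R⟦ν⟧`-module `A⟦ν⟧`, such that `a ⋆ b ≡ a * b (mod ν·A⟦ν⟧)`
for all `a, b : A` (viewed as constant power series).  The `R⟦ν⟧`-module structure on
`A⟦ν⟧` is given by `c • P = (map (algebraMap R A) c) * P`. -/
structure FormalDeformation (R A : Type*) [CommRing R] [Ring A] [Algebra R A] where
  star : PowerSeries A → PowerSeries A → PowerSeries A
  add_star : ∀ P Q S, star (P + Q) S = star P S + star Q S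
  star_add : ∀ P Q S, star P (Q + S) = star P Q + star P S
  smul_star : ∀ (c : PowerSeries R) (P Q : PowerSeries A),
      star (PowerSeries.map (algebraMap R A) c * P) Q
        = PowerSeries.map (algebraMap R A) c * star P Q
  star_smul : ∀ (c : PowerSeries R) (P Q : PowerSeries A),
      star P (PowerSeries.map (algebraMap R A) c * Q)
        = PowerSeries.map (algebraMap R A) c * star P Q
  star_assoc : ∀ P Q S, star (star P Q) S = star P (star Q S)
  one_star : ∀ P, star 1 P = P
  star_one : ∀ P, star P 1 = P
  star_deform : ∀ a b : A,
      constantCoeff (R := A) (star (C (R := A) a) (C (R := A) b)) = a * b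

namespace FormalDeformation

variable {R A : Type*} [CommRing R] [Ring A] [Algebra R A]

/-- `(a,b)ᵢ` : the coefficient of `νⁱ` in `a ⋆ b`, for `a b : A`. -/
noncomputable def prodCoeff (D : FormalDeformation R A) (i : ℕ) (a b : A) : A :=
  coeff (R := A) i (D.star (C (R := A) a) (C (R := A) b))

/-- `{a,b}ᵢ` : the coefficient of `νⁱ` in `a ⋆ b − b ⋆ a`, for `a b : A`. -/
noncomputable def brkt (D : FormalDeformation R A) (i : ℕ) (a b : A) : A :=
  coeff (R := A) i (D.star (C (R := A) a) (C (R := A) b) - D.star (C (R := A) b) (C (R := A) a))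

end FormalDeformation

/-- `H_ν = Z(A) + ν·A⟦ν⟧` : the power series whose constant term is central in `A`. -/
def Hnu (A : Type*) [Ring A] : Set (PowerSeries A) :=
  {P | constantCoeff (R := A) P ∈ Set.center A}

/-- `ν·H_ν` : the power series with vanishing constant term whose `ν`-coefficient is central. -/
def nuHnu (A : Type*) [Ring A] : Set (PowerSeries A) :=
  {P | coeff (R := A) 0 P = 0 ∧ coeff (R := A) 1 P ∈ Set.center A}

/-- `ν²·H_ν` : the power series with vanishing coefficients in degrees `0, 1` whose
`ν²`-coefficient is central. -/
def nu2Hnu (A : Type*) [Ring A] : Set (PowerSeries A) :=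
  {P | coeff (R := A) 0 P = 0 ∧ coeff (R := A) 1 P = 0 ∧ coeff (R := A) 2 P ∈ Set.center A}

section Aux

variable {R A : Type*} [CommRing R] [Ring A] [Algebra R A]

lemma coeff_zero_X_mul' (t : PowerSeries A) : coeff (R := A) 0 (X * t) = 0 := by
  simp [coeff_zero_eq_constantCoeff_apply, map_mul, constantCoeff_X]

lemma coeff_one_X_mul' (t : PowerSeries A) : coeff (R := A) 1 (X * t) = coeff (R := A) 0 t :=
  coeff_succ_X_mul 0 t

lemma coeff_two_X_mul' (t : PowerSeries A) : coeff (R := A) 2 (X * t) = coeff (R := A) 1 t :=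
  coeff_succ_X_mul 1 t

lemma coeff_one_C' (a : A) : coeff (R := A) 1 (C (R := A) a) = 0 := by simp [coeff_C]

/-- The shift of a power series: `shift P` has `n`-th coefficient the `(n+1)`-st of `P`. -/
noncomputable def shift (P : PowerSeries A) : PowerSeries A :=
  PowerSeries.mk fun n => coeff (R := A) (n + 1) P

lemma coeff_shift (P : PowerSeries A) (n : ℕ) : coeff (R := A) n (shift P) = coeff (R := A) (n + 1) P := by
  simp [shift]

lemma decomp (P : PowerSeries A) : P = C (R := A) (coeff (R := A) 0 P) + X * shift P := by
  ext n
  cases n with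
  | zero =>
    simp [shift, coeff_zero_eq_constantCoeff_apply, map_mul, constantCoeff_X]
  | succ n =>
    simp [shift, coeff_succ_X_mul, coeff_C]

end Aux

namespace FormalDeformation

variable {R A : Type*} [CommRing R] [Ring A] [Algebra R A] (D : FormalDeformation R A)

lemma star_zero (P : PowerSeries A) : D.star P 0 = 0 := by
  have h := D.star_add P 0 0
  rw [add_zero] at h
  exact (left_eq_add.mp h)

lemma zero_star (P : PowerSeries A) : D.star 0 P = 0 := by
  have h := D.add_star 0 0 P
  rw [add_zero] at h
  exact (left_eq_add.mp h)

lemma star_neg (P Q : PowerSeries A) : D.star P (-Q) = -D.star P Q := by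
  have h := D.star_add P Q (-Q)
  rw [add_neg_cancel, D.star_zero] at h
  exact eq_neg_of_add_eq_zero_right h.symm

lemma neg_star (P Q : PowerSeries A) : D.star (-P) Q = -D.star P Q := by
  have h := D.add_star P (-P) Q
  rw [add_neg_cancel, D.zero_star] at h
  exact eq_neg_of_add_eq_zero_right h.symm

lemma star_sub (P Q S : PowerSeries A) : D.star P (Q - S) = D.star P Q - D.star P S := by
  rw [sub_eq_add_neg, D.star_add, D.star_neg, sub_eq_add_neg]

lemma sub_star (P Q S : PowerSeries A) : D.star (P - Q) S = D.star P S - D.star Q S := by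
  rw [sub_eq_add_neg, D.add_star, D.neg_star, sub_eq_add_neg]

lemma star_X_mul (P Q : PowerSeries A) : D.star (X * P) Q = X * D.star P Q := by
  have h := D.smul_star X P Q
  rwa [PowerSeries.map_X] at h

lemma star_mul_X (P Q : PowerSeries A) : D.star P (X * Q) = X * D.star P Q := by
  have h := D.star_smul X P Q
  rwa [PowerSeries.map_X] at h

lemma star_expand (P Q : PowerSeries A) :
    D.star P Q =
      D.star (C (R := A) (coeff (R := A) 0 P)) (C (R := A) (coeff (R := A) 0 Q))
        + X * D.star (C (R := A) (coeff (R := A) 0 P)) (shift Q)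
        + X * D.star (shift P) (C (R := A) (coeff (R := A) 0 Q))
        + X * (X * D.star (shift P) (shift Q)) := by
  conv_lhs => rw [decomp P, decomp Q]
  rw [D.add_star, D.star_add, D.star_add, D.star_X_mul, D.star_X_mul, D.star_mul_X,
    D.star_mul_X]
  abel

lemma coeff_star_C_C (i : ℕ) (a b : A) :
    coeff (R := A) i (D.star (C (R := A) a) (C (R := A) b)) = D.prodCoeff i a b := rfl

lemma coeff_zero_star (P Q : PowerSeries A) :
    coeff (R := A) 0 (D.star P Q) = coeff (R := A) 0 P * coeff (R := A) 0 Q := by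
  rw [D.star_expand]
  simp [coeff_zero_X_mul', coeff_zero_eq_constantCoeff_apply, D.star_deform]

lemma prodCoeff_zero_left (i : ℕ) (b : A) : D.prodCoeff i 0 b = 0 := by
  simp [FormalDeformation.prodCoeff, map_zero, D.zero_star]

lemma prodCoeff_zero_right (i : ℕ) (a : A) : D.prodCoeff i a 0 = 0 := by
  simp [FormalDeformation.prodCoeff, map_zero, D.star_zero]

lemma coeff_one_star (P Q : PowerSeries A) :
    coeff (R := A) 1 (D.star P Q) =
      D.prodCoeff 1 (coeff (R := A) 0 P) (coeff (R := A) 0 Q)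
        + coeff (R := A) 0 P * coeff (R := A) 1 Q + coeff (R := A) 1 P * coeff (R := A) 0 Q := by
  rw [D.star_expand]
  simp only [map_add, coeff_one_X_mul', coeff_zero_X_mul', D.coeff_zero_star,
    D.coeff_star_C_C, coeff_shift, coeff_zero_C, add_zero]

lemma coeff_two_star (P Q : PowerSeries A) :
    coeff (R := A) 2 (D.star P Q) =
      D.prodCoeff 2 (coeff (R := A) 0 P) (coeff (R := A) 0 Q)
        + D.prodCoeff 1 (coeff (R := A) 0 P) (coeff (R := A) 1 Q)
        + D.prodCoeff 1 (coeff (R := A) 1 P) (coeff (R := A) 0 Q)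
        + coeff (R := A) 0 P * coeff (R := A) 2 Q + coeff (R := A) 2 P * coeff (R := A) 0 Q
        + coeff (R := A) 1 P * coeff (R := A) 1 Q := by
  rw [D.star_expand]
  simp only [map_add, coeff_two_X_mul', coeff_one_X_mul', coeff_zero_X_mul',
    D.coeff_one_star, D.coeff_zero_star, D.coeff_star_C_C, coeff_shift,
    coeff_zero_C, coeff_one_C', zero_mul, mul_zero, add_zero]
  abel

lemma brkt_eq (i : ℕ) (a b : A) :
    D.brkt i a b = D.prodCoeff i a b - D.prodCoeff i b a := by
  simp [FormalDeformation.brkt, FormalDeformation.prodCoeff, map_sub]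

lemma leibniz {z : A} (hz : z ∈ Set.center A) (b c : A) :
    D.brkt 1 z (b * c) = D.brkt 1 z b * c + b * D.brkt 1 z c := by
  have hz' : ∀ g : A, g * z = z * g := Semigroup.mem_center_iff.mp hz
  have key : D.star (C (R := A) z) (D.star (C (R := A) b) (C (R := A) c))
        - D.star (D.star (C (R := A) b) (C (R := A) c)) (C (R := A) z)
      = D.star (D.star (C (R := A) z) (C (R := A) b) - D.star (C (R := A) b) (C (R := A) z)) (C (R := A) c)
        + D.star (C (R := A) b) (D.star (C (R := A) z) (C (R := A) c) - D.star (C (R := A) c) (C (R := A) z)) := by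
    have a1 := D.star_assoc (C (R := A) z) (C (R := A) b) (C (R := A) c)
    have a2 := D.star_assoc (C (R := A) b) (C (R := A) z) (C (R := A) c)
    have a3 := D.star_assoc (C (R := A) b) (C (R := A) c) (C (R := A) z)
    rw [D.sub_star, D.star_sub, a1, a2, ← a3]
    abel
  have h1 := congrArg (coeff (R := A) 1) key
  have hU0 : coeff (R := A) 0 (D.star (C (R := A) z) (C (R := A) b) - D.star (C (R := A) b) (C (R := A) z)) = 0 := by
    rw [map_sub, D.coeff_zero_star, D.coeff_zero_star]
    simp [coeff_zero_C, hz' b]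
  have hV0 : coeff (R := A) 0 (D.star (C (R := A) z) (C (R := A) c) - D.star (C (R := A) c) (C (R := A) z)) = 0 := by
    rw [map_sub, D.coeff_zero_star, D.coeff_zero_star]
    simp [coeff_zero_C, hz' c]
  rw [map_sub, map_add] at h1
  rw [D.coeff_one_star (C (R := A) z) (D.star (C (R := A) b) (C (R := A) c)),
    D.coeff_one_star (D.star (C (R := A) b) (C (R := A) c)) (C (R := A) z),
    D.coeff_one_star (D.star (C (R := A) z) (C (R := A) b) - D.star (C (R := A) b) (C (R := A) z)) (C (R := A) c),
    D.coeff_one_star (C (R := A) b) (D.star (C (R := A) z) (C (R := A) c) - D.star (C (R := A) c) (C (R := A) z)),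
    hU0, hV0, D.coeff_zero_star (C (R := A) b) (C (R := A) c)] at h1
  simp only [coeff_zero_C, coeff_one_C', zero_mul, mul_zero, add_zero, zero_add,
    D.prodCoeff_zero_left, D.prodCoeff_zero_right] at h1
  rw [hz' (coeff (R := A) 1 (D.star (C (R := A) b) (C (R := A) c)))] at h1
  have hb : D.brkt 1 z b = coeff (R := A) 1 (D.star (C (R := A) z) (C (R := A) b) - D.star (C (R := A) b) (C (R := A) z)) := rfl
  have hc : D.brkt 1 z c = coeff (R := A) 1 (D.star (C (R := A) z) (C (R := A) c) - D.star (C (R := A) c) (C (R := A) z)) := rfl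
  rw [D.brkt_eq, hb, hc]
  abel_nf at h1 ⊢
  exact h1

lemma brkt_one_mem_center {z w : A} (hz : z ∈ Set.center A) (hw : w ∈ Set.center A) :
    D.brkt 1 z w ∈ Set.center A := by
  rw [Semigroup.mem_center_iff]
  intro c
  have hw' : ∀ g : A, g * w = w * g := Semigroup.mem_center_iff.mp hw
  have h1 := D.leibniz hz w c
  have h2 := D.leibniz hz c w
  rw [hw' c, h1, ← hw' (D.brkt 1 z c), add_comm] at h2
  exact (add_left_cancel h2).symm

end FormalDeformation

/-- (a) the `⋆`-commutator of two elements of `H_ν` lies in `ν·H_ν`;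
(b) `ν·H_ν` is a two-sided ideal of `(H_ν, ⋆)`;
(c) for `P ∈ H_ν` and `Q ∈ ν·H_ν` the commutator `P⋆Q − Q⋆P` lies in `ν²·H_ν`.
(These are the conditions making `H_ν/νH_ν`, with product induced by `⋆` and bracket
induced by `(1/ν)[·,·]_⋆`, a commutative Poisson algebra.) -/
theorem nuHnu_poisson_ideal {R A : Type*} [CommRing R] [Ring A] [Algebra R A]
    (D : FormalDeformation R A) :
    (∀ P Q : PowerSeries A, P ∈ Hnu A → Q ∈ Hnu A →
      D.star P Q - D.star Q P ∈ nuHnu A) ∧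
    (∀ P Q : PowerSeries A, P ∈ Hnu A → Q ∈ nuHnu A →
      D.star P Q ∈ nuHnu A ∧ D.star Q P ∈ nuHnu A) ∧
    (∀ P Q : PowerSeries A, P ∈ Hnu A → Q ∈ nuHnu A →
      D.star P Q - D.star Q P ∈ nu2Hnu A) := by
  have hcc : ∀ a : A, a ∈ Set.center A → ∀ g : A, g * a = a * g :=
    fun a ha => Semigroup.mem_center_iff.mp ha
  have hcz : ∀ P : PowerSeries A, P ∈ Hnu A → coeff (R := A) 0 P ∈ Set.center A := by
    intro P hP
    rw [coeff_zero_eq_constantCoeff_apply]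
    exact hP
  refine ⟨?_, ?_, ?_⟩ <;> intro P Q hP hQ
  · have hP0 := hcz P hP
    have hQ0 := hcz Q hQ
    constructor
    · rw [map_sub, D.coeff_zero_star, D.coeff_zero_star, hcc _ hP0 (coeff (R := A) 0 Q), sub_self]
    · have hkey : coeff (R := A) 1 (D.star P Q - D.star Q P)
          = D.brkt 1 (coeff (R := A) 0 P) (coeff (R := A) 0 Q) := by
        rw [map_sub, D.coeff_one_star, D.coeff_one_star, D.brkt_eq,
          hcc _ hP0 (coeff (R := A) 1 Q), hcc _ hQ0 (coeff (R := A) 1 P)]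
        abel
      rw [hkey]
      exact D.brkt_one_mem_center hP0 hQ0
  · have hP0 := hcz P hP
    obtain ⟨hQ0, hQ1⟩ := hQ
    refine ⟨⟨?_, ?_⟩, ?_, ?_⟩
    · rw [D.coeff_zero_star, hQ0, mul_zero]
    · have : coeff (R := A) 1 (D.star P Q) = coeff (R := A) 0 P * coeff (R := A) 1 Q := by
        rw [D.coeff_one_star, hQ0, D.prodCoeff_zero_right, mul_zero, add_zero, zero_add]
      rw [this]
      exact Set.mul_mem_center hP0 hQ1
    · rw [D.coeff_zero_star, hQ0, zero_mul]
    · have : coeff (R := A) 1 (D.star Q P) = coeff (R := A) 1 Q * coeff (R := A) 0 P := by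
        rw [D.coeff_one_star, hQ0, D.prodCoeff_zero_left, zero_mul, add_zero, zero_add]
      rw [this]
      exact Set.mul_mem_center hQ1 hP0
  · have hP0 := hcz P hP
    obtain ⟨hQ0, hQ1⟩ := hQ
    refine ⟨?_, ?_, ?_⟩
    · rw [map_sub, D.coeff_zero_star, D.coeff_zero_star, hQ0, mul_zero, zero_mul, sub_self]
    · rw [map_sub, D.coeff_one_star, D.coeff_one_star, hQ0, D.prodCoeff_zero_right,
        D.prodCoeff_zero_left]
      simp [hcc _ hP (coeff (R := A) 1 Q), hcc _ hP0 (coeff (R := A) 1 Q)]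
    · have hkey : coeff (R := A) 2 (D.star P Q - D.star Q P)
          = D.brkt 1 (coeff (R := A) 0 P) (coeff (R := A) 1 Q) := by
        rw [map_sub, D.coeff_two_star, D.coeff_two_star, hQ0, D.brkt_eq]
        simp only [D.prodCoeff_zero_left, D.prodCoeff_zero_right, mul_zero, zero_mul,
          add_zero, zero_add]
        rw [hcc _ hP0 (coeff (R := A) 2 Q), hcc _ hQ1 (coeff (R := A) 1 P)]
        abel
      rw [hkey]
      exact D.brkt_one_mem_center hP0 hQ1
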